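/- Let n jobs have processing times a_i, b_i ∈ ℕ with a_i ≤ b_i for all i. If the jobs are indexed so that a_1 ≤ a_2 ≤ … ≤ a_n (the SPT order on the first machine), then for every permutation σ of {1,…,n}, the makespan of the SPT sequence is less than or equal to the makespan of the sequence ordered by σ: max_{1 ≤ k ≤ n}( ∑_{i=1}^{k} a_i + ∑_{j=k}^{n} b_j ) ≤ max_{1 ≤ k ≤ n}( ∑_{i=1}^{k} a_{σ(i)} + ∑_{j=k}^{n} b_{σ(j)} ). -/
import Mathlib


/-- SPT optimality: if `a i ≤ b i` for all jobs and the jobs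
are indexed so that `a` is nondecreasing (SPT order on the first machine), then
for every permutation `σ` the makespan of the SPT sequence is at most the
makespan of the sequence ordered by `σ`, where the makespan of an order is
`max_{k} (∑_{i ≤ k} a_{σ i} + ∑_{j ≥ k} b_{σ j})`. -/
theorem spt_optimal (n : ℕ) (a b : Fin n → ℕ)
    (hab : ∀ i, a i ≤ b i) (hmono : Monotone a) (σ : Equiv.Perm (Fin n)) :
    (Finset.univ : Finset (Fin n)).sup
        (fun k => ∑ i ∈ Finset.univ.filter (fun i => i ≤ k), a i
                + ∑ j ∈ Finset.univ.filter (fun j => k ≤ j), b j)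
    ≤ (Finset.univ : Finset (Fin n)).sup
        (fun k => ∑ i ∈ Finset.univ.filter (fun i => i ≤ k), a (σ i)
                + ∑ j ∈ Finset.univ.filter (fun j => k ≤ j), b (σ j)) := by
  apply Finset.sup_le
  intro k _
  set T : Finset (Fin n) := Finset.univ.filter (fun q => k ≤ σ q) with hT
  have hne : T.Nonempty := ⟨σ.symm k, by simp [hT]⟩
  set p := T.min' hne with hp
  have hpT : p ∈ T := T.min'_mem hne
  have hkp : k ≤ σ p := (Finset.mem_filter.mp hpT).2
  have hmin : ∀ q ∈ T, p ≤ q := fun q hq => T.min'_le q hq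
  refine le_trans ?_ (Finset.le_sup (Finset.mem_univ p))
  have hTsub : T ⊆ Finset.univ.filter (fun j => p ≤ j) := by
    intro q hq
    simp only [Finset.mem_filter, Finset.mem_univ, true_and]
    exact hmin q hq
  -- prefix split
  have hP : Finset.univ.filter (fun i => i ≤ p)
      = insert p (Finset.univ.filter (fun i => i < p)) := by
    ext i
    simp only [Finset.mem_filter, Finset.mem_univ, true_and, Finset.mem_insert]
    constructor
    · intro h; rcases lt_or_eq_of_le h with h' | h'
      · exact Or.inr h'
      · exact Or.inl h'
    · rintro (rfl | h) <;> [exact le_refl _; exact le_of_lt h]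
  have hpnot : p ∉ Finset.univ.filter (fun i => i < p) := by simp
  have h1 : ∑ i ∈ Finset.univ.filter (fun i => i ≤ p), a (σ i)
      = a (σ p) + ∑ i ∈ Finset.univ.filter (fun i => i < p), a (σ i) := by
    rw [hP, Finset.sum_insert hpnot]
  -- suffix split
  have h2 : ∑ j ∈ Finset.univ.filter (fun j => p ≤ j) \ T, b (σ j)
      + ∑ j ∈ T, b (σ j)
      = ∑ j ∈ Finset.univ.filter (fun j => p ≤ j), b (σ j) :=
    Finset.sum_sdiff hTsub
  -- sum over T of b ∘ σ equals B_k
  have h3 : ∑ j ∈ T, b (σ j) = ∑ j ∈ Finset.univ.filter (fun j => k ≤ j), b j := by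
    refine Finset.sum_equiv σ ?_ ?_
    · intro j; simp [hT]
    · intro j _; rfl
  -- in the leftover, a ≤ b
  have h4 : ∑ j ∈ Finset.univ.filter (fun j => p ≤ j) \ T, a (σ j)
      ≤ ∑ j ∈ Finset.univ.filter (fun j => p ≤ j) \ T, b (σ j) :=
    Finset.sum_le_sum (fun j _ => hab (σ j))
  -- prefix-below-p ∪ leftover = complement of T
  have hdisj : Disjoint (Finset.univ.filter (fun i => i < p))
      (Finset.univ.filter (fun j => p ≤ j) \ T) := by
    rw [Finset.disjoint_left]
    intro i hi hi'
    simp only [Finset.mem_filter, Finset.mem_univ, true_and, Finset.mem_sdiff] at hi hi'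
    exact absurd hi'.1 (not_le.mpr hi)
  have hunion : Finset.univ.filter (fun i => i < p)
      ∪ (Finset.univ.filter (fun j => p ≤ j) \ T) = Finset.univ \ T := by
    ext i
    simp only [Finset.mem_union, Finset.mem_filter, Finset.mem_univ, true_and,
      Finset.mem_sdiff, hT]
    constructor
    · rintro (h | ⟨_, h⟩)
      · intro hmem
        exact absurd (hmin i (by simp [hT, hmem])) (not_le.mpr h)
      · exact h
    · intro h
      rcases lt_or_ge i p with h' | h'
      · exact Or.inl h'
      · exact Or.inr ⟨h', h⟩
  have h5 : ∑ i ∈ Finset.univ.filter (fun i => i < p), a (σ i)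
      + ∑ j ∈ Finset.univ.filter (fun j => p ≤ j) \ T, a (σ j)
      = ∑ j ∈ Finset.univ \ T, a (σ j) := by
    rw [← Finset.sum_union hdisj, hunion]
  have h6 : ∑ j ∈ Finset.univ \ T, a (σ j)
      = ∑ j ∈ Finset.univ.filter (fun j => j < k), a j := by
    refine Finset.sum_equiv σ ?_ ?_
    · intro j
      simp only [Finset.mem_sdiff, Finset.mem_univ, Finset.mem_filter, hT, true_and]
      exact not_le
    · intro j _; rfl
  have h7 : ∑ i ∈ Finset.univ.filter (fun i => i ≤ k), a i
      = a k + ∑ i ∈ Finset.univ.filter (fun i => i < k), a i := by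
    have hPk : Finset.univ.filter (fun i => i ≤ k)
        = insert k (Finset.univ.filter (fun i => i < k)) := by
      ext i
      simp only [Finset.mem_filter, Finset.mem_univ, true_and, Finset.mem_insert]
      constructor
      · intro h; rcases lt_or_eq_of_le h with h' | h'
        · exact Or.inr h'
        · exact Or.inl h'
      · rintro (rfl | h) <;> [exact le_refl _; exact le_of_lt h]
    rw [hPk, Finset.sum_insert (by simp)]
  have hak : a k ≤ a (σ p) := hmono hkp
  -- combine
  rw [h1, ← h2, h3, h7]
  have := h5
  omega
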